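/- Let n ≥ 3 be an odd integer and let r ≠ 1 be a unit of ℤ/nℤ of multiplicative order 2 such that r − 1 is also a unit of ℤ/nℤ. Then the Hamilton compression of X(2,n;r) satisfies κ(X(2,n;r)) ≥ 2. -/

import Mathlib

open SimpleGraph

/-- The automorphism group of a simple graph, as a subgroup of the permutation group
of the vertex set. -/
def autSubgroup {V : Type*} (X : SimpleGraph V) : Subgroup (Equiv.Perm V) where
  carrier := {π | ∀ u v : V, X.Adj (π u) (π v) ↔ X.Adj u v}
  one_mem' := fun u v => Iff.rfl
  mul_mem' := fun {a b} ha hb u v => (ha (b u) (b v)).trans (hb u v)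
  inv_mem' := fun {a} ha u v => by simpa using (ha (a⁻¹ u) (a⁻¹ v)).symm

/-- `c` is a Hamilton cycle of `X`, presented as a cyclic enumeration
`v_0, v_1, …, v_{N-1}` of the vertices (indices modulo `N = |V|`) with consecutive
vertices adjacent. -/
def IsHamCycle {V : Type*} [Fintype V] (X : SimpleGraph V)
    (c : ZMod (Fintype.card V) → V) : Prop :=
  Function.Bijective c ∧ ∀ i, X.Adj (c i) (c (i + 1))

/-- The Hamilton cycle `c` of `X` is `k`-symmetric: `k ∣ N` and some automorphism `α`
of `X` satisfies `α (v_i) = v_{i + N/k}` for all `i`. -/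
def IsSymmHamCycle {V : Type*} [Fintype V] (X : SimpleGraph V)
    (c : ZMod (Fintype.card V) → V) (k : ℕ) : Prop :=
  k ∣ Fintype.card V ∧
    ∃ α ∈ autSubgroup X, ∀ i, α (c i) = c (i + (Fintype.card V / k : ℕ))

/-- The Hamilton compression `κ(X)` of a graph `X`: the largest `k` such that some
Hamilton cycle of `X` is `k`-symmetric (and `0` if `X` has no Hamilton cycle). -/
noncomputable def hamiltonCompression {V : Type*} [Fintype V] (X : SimpleGraph V) : ℕ :=
  sSup {k | ∃ c, IsHamCycle X c ∧ IsSymmHamCycle X c k}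

/-- The metacirculant graph `X(m,n;r)` on vertex set `ℤ/m × ℤ/n`: vertex `(i,j)` is
adjacent to `(i, j ± r^i)` and `(i ± 1, j)`. -/
def metaGraph (m n : ℕ) (r : (ZMod n)ˣ) : SimpleGraph (ZMod m × ZMod n) :=
  SimpleGraph.fromRel (fun u v =>
    (u.1 = v.1 ∧ v.2 = u.2 + (r : ZMod n) ^ u.1.val) ∨ (u.2 = v.2 ∧ v.1 = u.1 + 1))

/-- For odd `n ≥ 3` and a unit `r ≠ 1` of `ℤ/n` of multiplicative
order `2` with `r - 1` a unit, `κ(X(2,n;r)) ≥ 2`. -/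
theorem stmt1 (n : ℕ) (hn : 3 ≤ n) (hodd : Odd n) (r : (ZMod n)ˣ)
    (hr1 : r ≠ 1) (hord : orderOf r = 2) (hru : IsUnit ((r : ZMod n) - 1)) :
    haveI : NeZero n := ⟨by omega⟩
    2 ≤ hamiltonCompression (metaGraph 2 n r) := by
  haveI : NeZero n := ⟨by omega⟩
  haveI : Fact (1 < n) := ⟨by omega⟩
  -- Step 1: the hypotheses force `r = -1`.
  have h2 : (r : ZMod n) ^ 2 = 1 := by
    have := pow_orderOf_eq_one r
    rw [hord] at this
    simpa using congrArg (Units.val) this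
  have hrv : (r : ZMod n) = -1 := by
    have h0 : ((r : ZMod n) - 1) * ((r : ZMod n) + 1) = ((r : ZMod n) - 1) * 0 := by
      linear_combination h2
    have h1 := hru.mul_left_cancel h0
    linear_combination h1
  -- Step 2: `a` with `a + a = 1`.
  obtain ⟨k, hk⟩ := hodd
  set a : ZMod n := ((k + 1 : ℕ) : ZMod n) with ha_def
  have ha : a + a = 1 := by
    have h0 : ((2 * k + 1 : ℕ) : ZMod n) = 0 := by rw [← hk]; exact ZMod.natCast_self n
    rw [ha_def]
    push_cast at h0 ⊢
    linear_combination h0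
  -- Step 3: set up the cycle.
  set N := Fintype.card (ZMod 2 × ZMod n) with hNdef
  have hN : N = 2 * n := by simp [hNdef, ZMod.card]
  haveI : NeZero N := ⟨by omega⟩
  haveI : Fact (1 < N) := ⟨by omega⟩
  set c : ZMod N → ZMod 2 × ZMod n := fun i =>
    if i.val < n then (0, a + (i.val : ZMod n)) else (1, -(a + (i.val : ZMod n)))
    with hc
  -- injectivity
  have hinj : Function.Injective c := by
    intro i j hij
    have hi : i.val < 2 * n := hN ▸ ZMod.val_lt i
    have hj : j.val < 2 * n := hN ▸ ZMod.val_lt j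
    simp only [hc] at hij
    apply ZMod.val_injective
    split_ifs at hij with hi1 hj1 hj1 <;>
      simp only [Prod.mk.injEq] at hij
    · have h4 := (ZMod.natCast_eq_natCast_iff _ _ _).mp
        (show ((i.val : ℕ) : ZMod n) = ((j.val : ℕ) : ZMod n) by linear_combination hij.2)
      unfold Nat.ModEq at h4
      rwa [Nat.mod_eq_of_lt hi1, Nat.mod_eq_of_lt hj1] at h4
    · exact absurd hij.1 (by decide)
    · exact absurd hij.1 (by decide)
    · have h4 := (ZMod.natCast_eq_natCast_iff _ _ _).mp
        (show ((i.val : ℕ) : ZMod n) = ((j.val : ℕ) : ZMod n) by linear_combination -hij.2)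
      unfold Nat.ModEq at h4
      have e1 : i.val % n = i.val - n := by
        rw [Nat.mod_eq_sub_mod (by omega)]
        exact Nat.mod_eq_of_lt (by omega)
      have e2 : j.val % n = j.val - n := by
        rw [Nat.mod_eq_sub_mod (by omega)]
        exact Nat.mod_eq_of_lt (by omega)
      omega
  have hbij : Function.Bijective c :=
    (Fintype.bijective_iff_injective_and_card c).mpr ⟨hinj, by rw [ZMod.card]⟩
  -- adjacency
  have hadj : ∀ i, (metaGraph 2 n r).Adj (c i) (c (i + 1)) := by
    intro i
    have hi : i.val < 2 * n := hN ▸ ZMod.val_lt i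
    have hv1 : (i + 1).val = (i.val + 1) % (2 * n) := by
      rw [ZMod.val_add, ZMod.val_one]
      exact congrArg _ hN
    rcases show (i.val + 1 < n) ∨ (i.val + 1 = n) ∨ (n ≤ i.val ∧ i.val + 1 < 2 * n) ∨
        (i.val + 1 = 2 * n) from by omega with h | h | ⟨h, h'⟩ | h
    · -- inside row 0
      have hv1' : (i + 1).val = i.val + 1 := by rw [hv1]; exact Nat.mod_eq_of_lt (by omega)
      have hci : c i = (0, a + (i.val : ZMod n)) := by
        simp only [hc]; rw [if_pos (by omega)]
      have hci1 : c (i + 1) = (0, a + ((i.val + 1 : ℕ) : ZMod n)) := by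
        simp only [hc, hv1']; rw [if_pos h]
      rw [hci, hci1, metaGraph, SimpleGraph.fromRel_adj]
      constructor
      · intro hcon
        simp only [Prod.mk.injEq] at hcon
        have h2 := hcon.2
        push_cast at h2
        exact one_ne_zero (α := ZMod n) (by linear_combination -h2)
      · left; left
        refine ⟨rfl, ?_⟩
        simp only [ZMod.val_zero, pow_zero]
        push_cast
        ring
    · -- crossing rung at i.val = n - 1
      have hv1' : (i + 1).val = n := by rw [hv1, h]; exact Nat.mod_eq_of_lt (by omega)
      have hci : c i = (0, a + (i.val : ZMod n)) := by
        simp only [hc]; rw [if_pos (by omega)]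
      have hci1 : c (i + 1) = (1, -(a + ((n : ℕ) : ZMod n))) := by
        simp only [hc, hv1']; rw [if_neg (by omega)]
      have hcast : ((i.val : ℕ) : ZMod n) = -1 := by
        rw [show i.val = n - 1 by omega, Nat.cast_sub (by omega)]
        simp
      rw [hci, hci1, metaGraph, SimpleGraph.fromRel_adj]
      refine ⟨?_, Or.inl (Or.inr ⟨?_, ?_⟩)⟩
      · intro hcon
        simp only [Prod.mk.injEq] at hcon
        exact absurd hcon.1 (by decide)
      · simp only [ZMod.natCast_self, hcast]
        linear_combination ha
      · show (1 : ZMod 2) = 0 + 1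
        decide
    · -- inside row 1
      have hv1' : (i + 1).val = i.val + 1 := by rw [hv1]; exact Nat.mod_eq_of_lt (by omega)
      have hci : c i = (1, -(a + (i.val : ZMod n))) := by
        simp only [hc]; rw [if_neg (by omega)]
      have hci1 : c (i + 1) = (1, -(a + ((i.val + 1 : ℕ) : ZMod n))) := by
        simp only [hc, hv1']; rw [if_neg (by omega)]
      rw [hci, hci1, metaGraph, SimpleGraph.fromRel_adj]
      constructor
      · intro hcon
        simp only [Prod.mk.injEq] at hcon
        have h2 := hcon.2
        push_cast at h2
        exact one_ne_zero (α := ZMod n) (by linear_combination h2)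
      · left; left
        refine ⟨rfl, ?_⟩
        rw [show ((1 : ZMod 2)).val = 1 from rfl, pow_one, hrv]
        push_cast
        ring
    · -- crossing rung back at i.val = 2n - 1
      have hv1' : (i + 1).val = 0 := by rw [hv1, h]; simp
      have hci : c i = (1, -(a + (i.val : ZMod n))) := by
        simp only [hc]; rw [if_neg (by omega)]
      have hci1 : c (i + 1) = (0, a + ((0 : ℕ) : ZMod n)) := by
        simp only [hc, hv1']; rw [if_pos (by omega)]
      have hcast : ((i.val : ℕ) : ZMod n) = -1 := by
        rw [show i.val = 2 * n - 1 by omega, Nat.cast_sub (by omega)]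
        push_cast [ZMod.natCast_self]
        ring
      rw [hci, hci1, metaGraph, SimpleGraph.fromRel_adj]
      refine ⟨?_, Or.inl (Or.inr ⟨?_, ?_⟩)⟩
      · intro hcon
        simp only [Prod.mk.injEq] at hcon
        exact absurd hcon.1 (by decide)
      · rw [hcast]
        push_cast
        linear_combination -ha
      · show (0 : ZMod 2) = 1 + 1
        decide
  -- the automorphism
  set α : Equiv.Perm (ZMod 2 × ZMod n) :=
    Equiv.prodCongr (Equiv.addLeft (1 : ZMod 2)) (Equiv.neg (ZMod n)) with hα
  have hαapp : ∀ w : ZMod 2 × ZMod n, α w = (1 + w.1, -w.2) := fun w => rfl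
  have hpow : ∀ t : ZMod 2, (r : ZMod n) ^ ((1 + t).val) = -(r : ZMod n) ^ (t.val) := by
    intro t
    fin_cases t
    · show (r : ZMod n) ^ 1 = -(r : ZMod n) ^ 0
      simp [hrv]
    · show (r : ZMod n) ^ 0 = -(r : ZMod n) ^ 1
      simp [hrv]
  have hαα : ∀ w : ZMod 2 × ZMod n, α (α w) = w := by
    rintro ⟨w1, w2⟩
    rw [hαapp, hαapp]
    simp only [neg_neg, ← add_assoc]
    rw [show (1 + 1 : ZMod 2) = 0 by decide, zero_add]
  have hR : ∀ u v : ZMod 2 × ZMod n,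
      ((u.1 = v.1 ∧ v.2 = u.2 + (r : ZMod n) ^ u.1.val) ∨ (u.2 = v.2 ∧ v.1 = u.1 + 1)) →
      (((α u).1 = (α v).1 ∧ (α v).2 = (α u).2 + (r : ZMod n) ^ (α u).1.val) ∨
        ((α u).2 = (α v).2 ∧ (α v).1 = (α u).1 + 1)) := by
    rintro ⟨u1, u2⟩ ⟨v1, v2⟩ (⟨h1, h2⟩ | ⟨h1, h2⟩) <;> rw [hαapp, hαapp]
    · left
      refine ⟨by rw [h1], ?_⟩
      simp only
      rw [hpow]
      linear_combination -h2
    · right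
      refine ⟨by rw [h1], ?_⟩
      show 1 + v1 = 1 + u1 + 1
      linear_combination h2
  have hmem : α ∈ autSubgroup (metaGraph 2 n r) := by
    intro u v
    simp only [metaGraph, SimpleGraph.fromRel_adj]
    constructor
    · rintro ⟨hne, h | h⟩
      · refine ⟨fun hcon => hne (by rw [hcon]), Or.inl ?_⟩
        have := hR (α u) (α v) h
        rwa [hαα, hαα] at this
      · refine ⟨fun hcon => hne (by rw [hcon]), Or.inr ?_⟩
        have := hR (α v) (α u) h
        rwa [hαα, hαα] at this
    · rintro ⟨hne, h | h⟩
      · exact ⟨fun hcon => hne (α.injective hcon), Or.inl (hR u v h)⟩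
      · exact ⟨fun hcon => hne (α.injective hcon), Or.inr (hR v u h)⟩
  -- the symmetry condition
  have hhalf : (N / 2 : ℕ) = n := by omega
  have hshiftval : ((n : ZMod N)).val = n := by
    rw [ZMod.val_natCast, Nat.mod_eq_of_lt (by omega)]
  have hshift : ∀ i, α (c i) = c (i + ((N / 2 : ℕ) : ZMod N)) := by
    intro i
    rw [hhalf]
    have hi : i.val < 2 * n := hN ▸ ZMod.val_lt i
    have hv : (i + (n : ZMod N)).val = (i.val + n) % (2 * n) := by
      rw [ZMod.val_add, hshiftval]
      exact congrArg _ hN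
    by_cases hcase : i.val < n
    · have hv' : (i + (n : ZMod N)).val = i.val + n := by
        rw [hv]; exact Nat.mod_eq_of_lt (by omega)
      have hci : c i = (0, a + (i.val : ZMod n)) := by
        simp only [hc]; rw [if_pos hcase]
      have hci1 : c (i + (n : ZMod N)) = (1, -(a + ((i.val + n : ℕ) : ZMod n))) := by
        simp only [hc, hv']; rw [if_neg (by omega)]
      rw [hci, hci1, hαapp]
      simp only [Prod.mk.injEq]
      constructor
      · decide
      · push_cast [ZMod.natCast_self]
        ring
    · have hv' : (i + (n : ZMod N)).val = i.val - n := by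
        rw [hv, Nat.mod_eq_sub_mod (by omega)]
        have e : i.val + n - 2 * n = i.val - n := by omega
        rw [e]
        exact Nat.mod_eq_of_lt (by omega)
      have hci : c i = (1, -(a + (i.val : ZMod n))) := by
        simp only [hc]; rw [if_neg hcase]
      have hci1 : c (i + (n : ZMod N)) = (0, a + ((i.val - n : ℕ) : ZMod n)) := by
        simp only [hc, hv']; rw [if_pos (by omega)]
      rw [hci, hci1, hαapp]
      simp only [Prod.mk.injEq, neg_neg]
      constructor
      · decide
      · rw [Nat.cast_sub (by omega)]
        push_cast [ZMod.natCast_self]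
        ring
  -- conclusion
  unfold hamiltonCompression
  apply le_csSup
  · refine ⟨N, ?_⟩
    rintro x ⟨c', _, hdvd, _⟩
    exact Nat.le_of_dvd (by omega) hdvd
  · exact ⟨c, ⟨hbij, hadj⟩, ⟨n, hN⟩, α, hmem, hshift⟩
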